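/- Any two non-directable orientations of an (ordered) even cycle are push equivalent. -/

import Mathlib

/-- Prefix xor of a boolean sequence. -/
def prefXor (f : ℕ → Bool) : ℕ → Bool
  | 0 => false
  | k + 1 => Bool.xor (prefXor f k) (f k)

lemma prefXor_xor (f g : ℕ → Bool) (k : ℕ) :
    prefXor (fun j => Bool.xor (f j) (g j)) k = Bool.xor (prefXor f k) (prefXor g k) := by
  induction k with
  | zero => rfl
  | succ k ih =>
      simp only [prefXor, ih]
      cases prefXor f k <;> cases prefXor g k <;> cases f k <;> cases g k <;> rfl

lemma fin_val_add_one' (n : ℕ) [NeZero n] (i : Fin n) :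
    ((i + 1 : Fin n)).val = if i.val + 1 = n then 0 else i.val + 1 := by
  have hi := i.isLt
  rw [Fin.add_def, Fin.val_one']
  rcases Nat.lt_or_ge 1 n with h | h
  · rw [Nat.mod_eq_of_lt h]
    split
    · next he => rw [he]; simp [Nat.mod_self]
    · next he => exact Nat.mod_eq_of_lt (by omega)
  · have hn1 : n = 1 := le_antisymm h (Nat.pos_of_ne_zero (NeZero.ne n))
    subst hn1
    have : i.val = 0 := by omega
    simp [this]

open Fin.NatCast in
/-- If the total xor of `f` vanishes, `f` is a coboundary. -/
lemma exists_potential (n : ℕ) [NeZero n] (f : Fin n → Bool)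
    (h : prefXor (fun k => f (k : Fin n)) n = false) :
    ∃ s : Fin n → Bool, ∀ i, Bool.xor (s i) (s (i + 1)) = f i := by
  set g : ℕ → Bool := fun k => f (k : Fin n) with hg
  refine ⟨fun i => prefXor g i.val, fun i => ?_⟩
  have hfi : f i = g i.val := by
    simp [hg, Fin.cast_val_eq_self]
  show Bool.xor (prefXor g i.val) (prefXor g ((i + 1 : Fin n)).val) = f i
  rw [hfi, fin_val_add_one']
  split
  · next he =>
    rw [← he] at h
    simp only [prefXor] at h ⊢
    cases h1 : prefXor g i.val <;> cases h2 : g i.val <;> simp only [h1, h2] at h ⊢ <;> simp at h ⊢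
  · next he =>
    show Bool.xor (prefXor g i.val) (prefXor g (i.val + 1)) = g i.val
    simp only [prefXor]
    cases prefXor g i.val <;> cases g i.val <;> rfl

open Fin.NatCast in
lemma total_true (n : ℕ) [NeZero n] (o : Fin n → Bool)
    (h : ¬ ∃ s : Fin n → Bool,
        (∀ i, Bool.xor (o i) (Bool.xor (s i) (s (i + 1))) = true) ∨
        (∀ i, Bool.xor (o i) (Bool.xor (s i) (s (i + 1))) = false)) :
    prefXor (fun k => o (k : Fin n)) n = true := by
  by_contra hc
  have hfalse : prefXor (fun k => o (k : Fin n)) n = false := by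
    cases hh : prefXor (fun k => o (k : Fin n)) n <;> simp_all
  obtain ⟨s, hs⟩ := exists_potential n o hfalse
  exact h ⟨s, Or.inr fun i => by
    have := hs i
    cases h1 : o i <;> cases h2 : s i <;> cases h3 : s (i + 1) <;> simp_all⟩

open Fin.NatCast in
/-- An orientation of the ordered even cycle `v₀v₁⋯v_{n-1}v₀` (`n` even) is encoded by
`o : Fin n → Bool`: `o i = true` iff the arc between `vᵢ` and `vᵢ₊₁` is the forward arc
`vᵢ → vᵢ₊₁`. Pushing the set `{vᵢ | s i = true}` changes bit `i` by `xor (s i) (s (i+1))`.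
Any two non-directable orientations of an even cycle are push equivalent. -/
theorem stmt8 (n : ℕ) [NeZero n] (hn : Even n) (o₁ o₂ : Fin n → Bool)
    (h₁ : ¬ ∃ s : Fin n → Bool,
        (∀ i, Bool.xor (o₁ i) (Bool.xor (s i) (s (i + 1))) = true) ∨
        (∀ i, Bool.xor (o₁ i) (Bool.xor (s i) (s (i + 1))) = false))
    (h₂ : ¬ ∃ s : Fin n → Bool,
        (∀ i, Bool.xor (o₂ i) (Bool.xor (s i) (s (i + 1))) = true) ∨
        (∀ i, Bool.xor (o₂ i) (Bool.xor (s i) (s (i + 1))) = false)) :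
    ∃ s : Fin n → Bool, ∀ i, Bool.xor (o₁ i) (Bool.xor (s i) (s (i + 1))) = o₂ i := by
  have t₁ := total_true n o₁ h₁
  have t₂ := total_true n o₂ h₂
  have hf : prefXor (fun k => Bool.xor (o₁ (k : Fin n)) (o₂ (k : Fin n))) n = false := by
    rw [prefXor_xor, t₁, t₂]; rfl
  obtain ⟨s, hs⟩ := exists_potential n (fun i => Bool.xor (o₁ i) (o₂ i)) hf
  refine ⟨s, fun i => ?_⟩
  have := hs i
  cases h1 : o₁ i <;> cases h2 : o₂ i <;> cases h3 : s i <;> cases h4 : s (i + 1) <;> simp_all
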